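/- Let Θ ⊂ ℝ^p be convex and compact and let A, C, K be continuously differentiable maps from ℝ^p to real matrices of sizes d×m, m×m, and m×d respectively, with sup_{θ∈Θ} ‖A(θ)‖_op < ∞, sup_{θ∈Θ} ‖K(θ)‖_op < ∞, bounded derivatives on Θ, and sup_{θ∈Θ} ‖C(θ)‖_op ≤ c̄ for some c̄ ∈ [0,1). Then there exists M ≥ 0 such that for every θ ∈ Θ and every j ≥ 1, the Fréchet derivative at θ of the map θ ↦ A(θ)·C(θ)^j·K(θ) has operator norm at most M·(j+1)·c̄^{j−1}; consequently ∑_{j=1}^∞ sup_{θ∈Θ} ‖D_θ(A(θ)·C(θ)^j·K(θ))‖ < ∞. -/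

import Mathlib

attribute [local instance] Matrix.normedAddCommGroup Matrix.normedSpace

noncomputable abbrev matrixNormTopology {m n : Type*} [Fintype m] [Fintype n] :
    TopologicalSpace (Matrix m n ℝ) :=
  (Matrix.normedAddCommGroup : NormedAddCommGroup (Matrix m n ℝ)).toUniformSpace.toTopologicalSpace

attribute [local instance] matrixNormTopology

/-- The operator (spectral) norm of a real matrix, i.e. the operator norm of the induced
linear map between Euclidean spaces. -/
noncomputable def opNorm {m n : ℕ} (A : Matrix (Fin m) (Fin n) ℝ) : ℝ :=
  ‖LinearMap.toContinuousLinearMap (Matrix.toEuclideanLin A)‖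

/-- The map `θ ↦ A(θ) C(θ)^j K(θ)`, viewed as valued in continuous linear maps between
Euclidean spaces (so that its Fréchet derivative is measured with respect to the
operator/spectral norm on matrices). -/
noncomputable def prodMap {p d m : ℕ}
    (A : EuclideanSpace ℝ (Fin p) → Matrix (Fin d) (Fin m) ℝ)
    (C : EuclideanSpace ℝ (Fin p) → Matrix (Fin m) (Fin m) ℝ)
    (K : EuclideanSpace ℝ (Fin p) → Matrix (Fin m) (Fin d) ℝ) (j : ℕ)
    (θ : EuclideanSpace ℝ (Fin p)) :
    EuclideanSpace ℝ (Fin d) →L[ℝ] EuclideanSpace ℝ (Fin d) :=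
  LinearMap.toContinuousLinearMap (Matrix.toEuclideanLin (A θ * C θ ^ j * K θ))

/-! ### Auxiliary constructions -/


/-- The linear map sending a matrix to the induced continuous linear map between Euclidean
spaces, bundled as a continuous linear map. -/
noncomputable def toE {a b : ℕ} :
    Matrix (Fin a) (Fin b) ℝ →L[ℝ] (EuclideanSpace ℝ (Fin b) →L[ℝ] EuclideanSpace ℝ (Fin a)) :=
  LinearMap.toContinuousLinearMap
    ((LinearMap.toContinuousLinearMap :
        (EuclideanSpace ℝ (Fin b) →ₗ[ℝ] EuclideanSpace ℝ (Fin a)) ≃ₗ[ℝ] _).toLinearMap ∘ₗ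
      (Matrix.toEuclideanLin :
        Matrix (Fin a) (Fin b) ℝ ≃ₗ[ℝ] _).toLinearMap)

lemma toE_apply {a b : ℕ} (X : Matrix (Fin a) (Fin b) ℝ) :
    toE X = LinearMap.toContinuousLinearMap (Matrix.toEuclideanLin X) := rfl

lemma prodMap_eq {p d m : ℕ}
    (A : EuclideanSpace ℝ (Fin p) → Matrix (Fin d) (Fin m) ℝ)
    (C : EuclideanSpace ℝ (Fin p) → Matrix (Fin m) (Fin m) ℝ)
    (K : EuclideanSpace ℝ (Fin p) → Matrix (Fin m) (Fin d) ℝ) (j : ℕ) :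
    prodMap A C K j = fun θ => toE (A θ * C θ ^ j * K θ) := rfl

lemma opNorm_eq {a b : ℕ} (X : Matrix (Fin a) (Fin b) ℝ) : opNorm X = ‖toE X‖ := rfl

lemma opNorm_nonneg' {a b : ℕ} (X : Matrix (Fin a) (Fin b) ℝ) : 0 ≤ opNorm X :=
  norm_nonneg _

lemma toE_mul {a b c : ℕ} (X : Matrix (Fin a) (Fin b) ℝ) (Y : Matrix (Fin b) (Fin c) ℝ) :
    toE (X * Y) = (toE X).comp (toE Y) := by
  ext v
  simp [toE_apply, Matrix.toEuclideanLin_eq_toLin, Matrix.toLin_mul _ (PiLp.basisFun 2 ℝ (Fin b))]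

lemma opNorm_mul_le' {a b c : ℕ} (X : Matrix (Fin a) (Fin b) ℝ) (Y : Matrix (Fin b) (Fin c) ℝ) :
    opNorm (X * Y) ≤ opNorm X * opNorm Y := by
  rw [opNorm_eq, opNorm_eq, opNorm_eq, toE_mul]
  exact ContinuousLinearMap.opNorm_comp_le _ _

lemma opNorm_add_le' {a b : ℕ} (X Y : Matrix (Fin a) (Fin b) ℝ) :
    opNorm (X + Y) ≤ opNorm X + opNorm Y := by
  rw [opNorm_eq, opNorm_eq, opNorm_eq, map_add]
  exact norm_add_le _ _

lemma opNorm_le_norm' {a b : ℕ} (X : Matrix (Fin a) (Fin b) ℝ) :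
    opNorm X ≤ ‖(toE : Matrix (Fin a) (Fin b) ℝ →L[ℝ] _)‖ * ‖X‖ := by
  rw [opNorm_eq]; exact (toE).le_opNorm X

/-- Matrix multiplication as a bilinear map. -/
noncomputable def mulLM (a b c : ℕ) :
    Matrix (Fin a) (Fin b) ℝ →ₗ[ℝ] Matrix (Fin b) (Fin c) ℝ →ₗ[ℝ] Matrix (Fin a) (Fin c) ℝ :=
  LinearMap.mk₂ ℝ (· * ·) Matrix.add_mul (fun r X Y => Matrix.smul_mul r X Y)
    Matrix.mul_add (fun r X Y => Matrix.mul_smul X r Y)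

/-- Matrix multiplication as a continuous bilinear map. -/
noncomputable def mulCLM (a b c : ℕ) :
    Matrix (Fin a) (Fin b) ℝ →L[ℝ] Matrix (Fin b) (Fin c) ℝ →L[ℝ] Matrix (Fin a) (Fin c) ℝ :=
  LinearMap.toContinuousLinearMap
    ((LinearMap.toContinuousLinearMap :
        (Matrix (Fin b) (Fin c) ℝ →ₗ[ℝ] Matrix (Fin a) (Fin c) ℝ) ≃ₗ[ℝ] _).toLinearMap ∘ₗ
      mulLM a b c)

@[simp] lemma mulCLM_apply {a b c : ℕ} (X : Matrix (Fin a) (Fin b) ℝ)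
    (Y : Matrix (Fin b) (Fin c) ℝ) : mulCLM a b c X Y = X * Y := rfl

/-- Product rule for matrix-valued maps. -/
lemma hasFDerivAt_matmul {E : Type*} [NormedAddCommGroup E] [NormedSpace ℝ E]
    {a b c : ℕ} {f : E → Matrix (Fin a) (Fin b) ℝ} {g : E → Matrix (Fin b) (Fin c) ℝ}
    {f' : E →L[ℝ] Matrix (Fin a) (Fin b) ℝ} {g' : E →L[ℝ] Matrix (Fin b) (Fin c) ℝ} {θ : E}
    (hf : HasFDerivAt f f' θ) (hg : HasFDerivAt g g' θ) :
    HasFDerivAt (fun θ => f θ * g θ)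
      (((mulCLM a b c).flip (g θ)).comp f' + ((mulCLM a b c) (f θ)).comp g') θ := by
  have h := ((mulCLM a b c).isBoundedBilinearMap.hasFDerivAt (f θ, g θ)).comp θ (hf.prodMk hg)
  refine h.congr_fderiv ?_
  ext v
  simp [IsBoundedBilinearMap.deriv_apply]
  abel

set_option maxHeartbeats 2000000 in
/-- **Summable derivative bounds for `θ ↦ A(θ) C(θ)^j K(θ)`.** -/
theorem summable_fderiv_opNorm_of_contraction
    {p d m : ℕ} (Θ : Set (EuclideanSpace ℝ (Fin p)))
    (hconv : Convex ℝ Θ) (hcomp : IsCompact Θ)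
    (A : EuclideanSpace ℝ (Fin p) → Matrix (Fin d) (Fin m) ℝ)
    (C : EuclideanSpace ℝ (Fin p) → Matrix (Fin m) (Fin m) ℝ)
    (K : EuclideanSpace ℝ (Fin p) → Matrix (Fin m) (Fin d) ℝ)
    (hA : ContDiff ℝ 1 A) (hC : ContDiff ℝ 1 C) (hK : ContDiff ℝ 1 K)
    (CA CK : ℝ) (hCA : ∀ θ ∈ Θ, opNorm (A θ) ≤ CA) (hCK : ∀ θ ∈ Θ, opNorm (K θ) ≤ CK)
    (D : ℝ) (hDA : ∀ θ ∈ Θ, ‖fderiv ℝ A θ‖ ≤ D) (hDC : ∀ θ ∈ Θ, ‖fderiv ℝ C θ‖ ≤ D)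
    (hDK : ∀ θ ∈ Θ, ‖fderiv ℝ K θ‖ ≤ D)
    (c : ℝ) (hc0 : 0 ≤ c) (hc1 : c < 1) (hCc : ∀ θ ∈ Θ, opNorm (C θ) ≤ c) :
    ∃ M : ℝ, 0 ≤ M ∧
      (∀ θ ∈ Θ, ∀ j : ℕ, 1 ≤ j →
        ‖fderiv ℝ (prodMap A C K j) θ‖ ≤ M * ((j : ℝ) + 1) * c ^ (j - 1)) ∧
      Summable (fun j : ℕ => ⨆ θ ∈ Θ, ‖fderiv ℝ (prodMap A C K (j + 1)) θ‖) := by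
  classical
  rcases Set.eq_empty_or_nonempty Θ with hΘ | ⟨θ₀, hθ₀⟩
  · refine ⟨0, le_refl 0, by simp [hΘ], ?_⟩
    have : (fun j : ℕ => ⨆ θ ∈ Θ, ‖fderiv ℝ (prodMap A C K (j + 1)) θ‖) = fun _ => 0 := by
      funext j
      simp [hΘ, Real.iSup_of_isEmpty, ciSup_const]
    rw [this]
    exact summable_zero
  -- nonnegativity of the given constants
  have hCA0 : 0 ≤ CA := (opNorm_nonneg' _).trans (hCA θ₀ hθ₀)
  have hCK0 : 0 ≤ CK := (opNorm_nonneg' _).trans (hCK θ₀ hθ₀)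
  have hD0 : 0 ≤ D := (norm_nonneg _).trans (hDA θ₀ hθ₀)
  -- norm-comparison constants
  set κA : ℝ := ‖(toE : Matrix (Fin d) (Fin m) ℝ →L[ℝ] _)‖ with hκA
  set κC : ℝ := ‖(toE : Matrix (Fin m) (Fin m) ℝ →L[ℝ] _)‖ with hκC
  set κK : ℝ := ‖(toE : Matrix (Fin m) (Fin d) ℝ →L[ℝ] _)‖ with hκK
  set EA : ℝ := κA * D with hEA
  set EC : ℝ := κC * D with hEC
  set EK : ℝ := κK * D with hEK
  have hEA0 : 0 ≤ EA := mul_nonneg (by rw [hκA]; exact ContinuousLinearMap.opNorm_nonneg _) hD0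
  have hEC0 : 0 ≤ EC := mul_nonneg (by rw [hκC]; exact ContinuousLinearMap.opNorm_nonneg _) hD0
  have hEK0 : 0 ≤ EK := mul_nonneg (by rw [hκK]; exact ContinuousLinearMap.opNorm_nonneg _) hD0
  have hdA : Differentiable ℝ A := hA.differentiable one_ne_zero
  have hdC : Differentiable ℝ C := hC.differentiable one_ne_zero
  have hdK : Differentiable ℝ K := hK.differentiable one_ne_zero
  -- directional derivative bounds
  have hAv : ∀ θ ∈ Θ, ∀ v, opNorm (fderiv ℝ A θ v) ≤ EA * ‖v‖ := by
    intro θ hθ v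
    calc opNorm (fderiv ℝ A θ v) ≤ κA * ‖fderiv ℝ A θ v‖ := opNorm_le_norm' _
      _ ≤ κA * (D * ‖v‖) := by
          refine mul_le_mul_of_nonneg_left ?_ (by rw [hκA]; exact ContinuousLinearMap.opNorm_nonneg _)
          exact ((fderiv ℝ A θ).le_opNorm v).trans
            (mul_le_mul_of_nonneg_right (hDA θ hθ) (norm_nonneg v))
      _ = EA * ‖v‖ := by rw [hEA]; ring
  have hCv : ∀ θ ∈ Θ, ∀ v, opNorm (fderiv ℝ C θ v) ≤ EC * ‖v‖ := by
    intro θ hθ v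
    calc opNorm (fderiv ℝ C θ v) ≤ κC * ‖fderiv ℝ C θ v‖ := opNorm_le_norm' _
      _ ≤ κC * (D * ‖v‖) := by
          refine mul_le_mul_of_nonneg_left ?_ (by rw [hκC]; exact ContinuousLinearMap.opNorm_nonneg _)
          exact ((fderiv ℝ C θ).le_opNorm v).trans
            (mul_le_mul_of_nonneg_right (hDC θ hθ) (norm_nonneg v))
      _ = EC * ‖v‖ := by rw [hEC]; ring
  have hKv : ∀ θ ∈ Θ, ∀ v, opNorm (fderiv ℝ K θ v) ≤ EK * ‖v‖ := by
    intro θ hθ v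
    calc opNorm (fderiv ℝ K θ v) ≤ κK * ‖fderiv ℝ K θ v‖ := opNorm_le_norm' _
      _ ≤ κK * (D * ‖v‖) := by
          refine mul_le_mul_of_nonneg_left ?_ (by rw [hκK]; exact ContinuousLinearMap.opNorm_nonneg _)
          exact ((fderiv ℝ K θ).le_opNorm v).trans
            (mul_le_mul_of_nonneg_right (hDK θ hθ) (norm_nonneg v))
      _ = EK * ‖v‖ := by rw [hEK]; ring
  -- operator norm of powers of C
  have hCpow : ∀ n : ℕ, ∀ θ ∈ Θ, opNorm (C θ ^ (n + 1)) ≤ c ^ (n + 1) := by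
    intro n
    induction n with
    | zero => intro θ hθ; simpa using hCc θ hθ
    | succ n ih =>
      intro θ hθ
      calc opNorm (C θ ^ (n + 2)) = opNorm (C θ ^ (n + 1) * C θ) := by rw [pow_succ]
        _ ≤ opNorm (C θ ^ (n + 1)) * opNorm (C θ) := opNorm_mul_le' _ _
        _ ≤ c ^ (n + 1) * c :=
            mul_le_mul (ih θ hθ) (hCc θ hθ) (opNorm_nonneg' _) (pow_nonneg hc0 _)
        _ = c ^ (n + 2) := by ring
  -- derivative of powers of C : differentiability and directional bound
  have hpow : ∀ n : ℕ, Differentiable ℝ (fun θ => C θ ^ (n + 1)) ∧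
      ∀ θ ∈ Θ, ∀ v, opNorm (fderiv ℝ (fun θ => C θ ^ (n + 1)) θ v) ≤
        ((n : ℝ) + 1) * c ^ n * EC * ‖v‖ := by
    intro n
    induction n with
    | zero =>
      constructor
      · simpa [pow_one] using hdC
      · intro θ hθ v
        simpa [pow_one] using hCv θ hθ v
    | succ n ih =>
      have hfe : (fun θ => C θ ^ (n + 1 + 1)) = fun θ => C θ ^ (n + 1) * C θ := by
        funext θ; rw [pow_succ]
      have hder : ∀ θ : EuclideanSpace ℝ (Fin p),
          HasFDerivAt (fun θ => C θ ^ (n + 1) * C θ)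
            (((mulCLM m m m).flip (C θ)).comp (fderiv ℝ (fun θ => C θ ^ (n + 1)) θ) +
              ((mulCLM m m m) (C θ ^ (n + 1))).comp (fderiv ℝ C θ)) θ := by
        intro θ
        exact hasFDerivAt_matmul ((ih.1 θ).hasFDerivAt) ((hdC θ).hasFDerivAt)
      constructor
      · rw [hfe]
        exact fun θ => (hder θ).differentiableAt
      · intro θ hθ v
        have hfd : fderiv ℝ (fun θ => C θ ^ (n + 1 + 1)) θ =
            (((mulCLM m m m).flip (C θ)).comp (fderiv ℝ (fun θ => C θ ^ (n + 1)) θ) +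
              ((mulCLM m m m) (C θ ^ (n + 1))).comp (fderiv ℝ C θ)) := by
          rw [hfe]; exact (hder θ).fderiv
        rw [hfd]
        have happ : (((mulCLM m m m).flip (C θ)).comp (fderiv ℝ (fun θ => C θ ^ (n + 1)) θ) +
              ((mulCLM m m m) (C θ ^ (n + 1))).comp (fderiv ℝ C θ)) v =
            fderiv ℝ (fun θ => C θ ^ (n + 1)) θ v * C θ +
              C θ ^ (n + 1) * fderiv ℝ C θ v := by
          simp
        rw [happ]
        have h1 : opNorm (fderiv ℝ (fun θ => C θ ^ (n + 1)) θ v * C θ) ≤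
            (((n : ℝ) + 1) * c ^ n * EC * ‖v‖) * c :=
          (opNorm_mul_le' _ _).trans
            (mul_le_mul (ih.2 θ hθ v) (hCc θ hθ) (opNorm_nonneg' _)
              (by positivity))
        have h2 : opNorm (C θ ^ (n + 1) * fderiv ℝ C θ v) ≤ c ^ (n + 1) * (EC * ‖v‖) :=
          (opNorm_mul_le' _ _).trans
            (mul_le_mul (hCpow n θ hθ) (hCv θ hθ v) (opNorm_nonneg' _)
              (pow_nonneg hc0 _))
        refine (opNorm_add_le' _ _).trans ((add_le_add h1 h2).trans ?_)
        have : (((n : ℝ) + 1) * c ^ n * EC * ‖v‖) * c + c ^ (n + 1) * (EC * ‖v‖) =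
            ((n : ℝ) + 1 + 1) * c ^ (n + 1) * EC * ‖v‖ := by
          rw [pow_succ]; ring
        rw [this]
        push_cast
        exact le_of_eq (by ring)
  -- the main estimate
  set M : ℝ := EA * CK + CA * EC * CK + CA * EK with hM
  have hM0 : 0 ≤ M := by positivity
  have main : ∀ θ ∈ Θ, ∀ n : ℕ,
      ‖fderiv ℝ (prodMap A C K (n + 1)) θ‖ ≤ M * ((n : ℝ) + 2) * c ^ n := by
    intro θ hθ n
    -- derivative of G := A * C^(n+1)
    have hG : HasFDerivAt (fun θ => A θ * C θ ^ (n + 1))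
        (((mulCLM d m m).flip (C θ ^ (n + 1))).comp (fderiv ℝ A θ) +
          ((mulCLM d m m) (A θ)).comp (fderiv ℝ (fun θ => C θ ^ (n + 1)) θ)) θ :=
      hasFDerivAt_matmul ((hdA θ).hasFDerivAt) (((hpow n).1 θ).hasFDerivAt)
    set G' := ((mulCLM d m m).flip (C θ ^ (n + 1))).comp (fderiv ℝ A θ) +
        ((mulCLM d m m) (A θ)).comp (fderiv ℝ (fun θ => C θ ^ (n + 1)) θ) with hG'
    have hF : HasFDerivAt (fun θ => A θ * C θ ^ (n + 1) * K θ)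
        (((mulCLM d m d).flip (K θ)).comp G' +
          ((mulCLM d m d) (A θ * C θ ^ (n + 1))).comp (fderiv ℝ K θ)) θ :=
      hasFDerivAt_matmul hG ((hdK θ).hasFDerivAt)
    set F' := ((mulCLM d m d).flip (K θ)).comp G' +
        ((mulCLM d m d) (A θ * C θ ^ (n + 1))).comp (fderiv ℝ K θ) with hF'
    rw [prodMap_eq]
    have hPd : HasFDerivAt (fun θ => toE (A θ * C θ ^ (n + 1) * K θ))
        ((toE : Matrix (Fin d) (Fin d) ℝ →L[ℝ] _).comp F') θ :=
      (ContinuousLinearMap.hasFDerivAt _).comp θ hF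
    rw [hPd.fderiv]
    refine ContinuousLinearMap.opNorm_le_bound _ ?_ fun v => ?_
    · positivity
    have hval : ((toE : Matrix (Fin d) (Fin d) ℝ →L[ℝ] _).comp F') v = toE (F' v) := rfl
    rw [hval, ← opNorm_eq]
    have hF'v : F' v = (G' v) * K θ + (A θ * C θ ^ (n + 1)) * fderiv ℝ K θ v := by
      simp [hF']
    have hG'v : G' v = fderiv ℝ A θ v * C θ ^ (n + 1) +
        A θ * fderiv ℝ (fun θ => C θ ^ (n + 1)) θ v := by
      simp [hG']
    have hG'b : opNorm (G' v) ≤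
        EA * ‖v‖ * c ^ (n + 1) + CA * (((n : ℝ) + 1) * c ^ n * EC * ‖v‖) := by
      rw [hG'v]
      refine (opNorm_add_le' _ _).trans (add_le_add ?_ ?_)
      · exact (opNorm_mul_le' _ _).trans
          (mul_le_mul (hAv θ hθ v) (hCpow n θ hθ) (opNorm_nonneg' _) (by positivity))
      · exact (opNorm_mul_le' _ _).trans
          (mul_le_mul (hCA θ hθ) ((hpow n).2 θ hθ v) (opNorm_nonneg' _) hCA0)
    have hGθ : opNorm (A θ * C θ ^ (n + 1)) ≤ CA * c ^ (n + 1) :=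
      (opNorm_mul_le' _ _).trans
        (mul_le_mul (hCA θ hθ) (hCpow n θ hθ) (opNorm_nonneg' _) hCA0)
    have hF'b : opNorm (F' v) ≤
        (EA * ‖v‖ * c ^ (n + 1) + CA * (((n : ℝ) + 1) * c ^ n * EC * ‖v‖)) * CK +
          (CA * c ^ (n + 1)) * (EK * ‖v‖) := by
      rw [hF'v]
      refine (opNorm_add_le' _ _).trans (add_le_add ?_ ?_)
      · refine (opNorm_mul_le' _ _).trans
          (mul_le_mul hG'b (hCK θ hθ) (opNorm_nonneg' _) ?_)
        positivity
      · exact (opNorm_mul_le' _ _).trans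
          (mul_le_mul hGθ (hKv θ hθ v) (opNorm_nonneg' _) (by positivity))
    refine hF'b.trans ?_
    have hcc : c ^ (n + 1) ≤ c ^ n := pow_le_pow_of_le_one hc0 hc1.le (Nat.le_succ n)
    have hN : (0 : ℝ) ≤ (n : ℝ) := Nat.cast_nonneg n
    have hv : (0 : ℝ) ≤ ‖v‖ := norm_nonneg v
    have hq : (0 : ℝ) ≤ c ^ n := pow_nonneg hc0 n
    rw [hM]
    nlinarith [mul_nonneg (mul_nonneg (mul_nonneg hEA0 hCK0) hv) hq,
      mul_nonneg (mul_nonneg (mul_nonneg hCA0 hEK0) hv) hq,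
      mul_nonneg (mul_nonneg (mul_nonneg hEA0 hCK0) hv) (sub_nonneg.mpr hcc),
      mul_nonneg (mul_nonneg (mul_nonneg hCA0 hEK0) hv) (sub_nonneg.mpr hcc),
      mul_nonneg (mul_nonneg (mul_nonneg (mul_nonneg hCA0 hEC0) hCK0) hv) hq,
      mul_nonneg hN (mul_nonneg (mul_nonneg (mul_nonneg hEA0 hCK0) hv) hq),
      mul_nonneg hN (mul_nonneg (mul_nonneg (mul_nonneg hCA0 hEK0) hv) hq)]
  refine ⟨M, hM0, ?_, ?_⟩
  · intro θ hθ j hj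
    obtain ⟨n, rfl⟩ : ∃ n, j = n + 1 := ⟨j - 1, by omega⟩
    have := main θ hθ n
    simpa [Nat.add_sub_cancel, add_assoc] using this.trans (le_of_eq (by push_cast; ring))
  · have hle : ∀ j : ℕ, (⨆ θ ∈ Θ, ‖fderiv ℝ (prodMap A C K (j + 1)) θ‖) ≤
        M * ((j : ℝ) + 2) * c ^ j := by
      intro j
      refine Real.iSup_le (fun θ => Real.iSup_le (fun hθ => main θ hθ j) (by positivity))
        (by positivity)
    have hnn : ∀ j : ℕ, 0 ≤ ⨆ θ ∈ Θ, ‖fderiv ℝ (prodMap A C K (j + 1)) θ‖ := by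
      intro j
      exact Real.iSup_nonneg fun θ => Real.iSup_nonneg fun _ => ContinuousLinearMap.opNorm_nonneg _
    have hsum : Summable (fun j : ℕ => M * ((j : ℝ) + 2) * c ^ j) := by
      have h1 : Summable (fun j : ℕ => (j : ℝ) * c ^ j) := by
        simpa using summable_pow_mul_geometric_of_norm_lt_one 1
          (r := c) (by rwa [Real.norm_eq_abs, abs_of_nonneg hc0])
      have h2 : Summable (fun j : ℕ => c ^ j) := summable_geometric_of_lt_one hc0 hc1
      have := (h1.mul_left M).add ((h2.mul_left (2 * M)))
      refine this.congr fun j => by ring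
    exact Summable.of_nonneg_of_le hnn hle hsum
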